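/- Let V ⊆ ℝ be a set that is simultaneously a Vitali set and a Bernstein set, let B ⊆ ℝ be nonmeager with the Baire property, and let r₀ ∈ ℚ be such that F = (V + r₀) ∩ B is nonmeager. Then F is a full subset of B: every set with the Baire property that is contained in B \ F is meager. -/

import Mathlib

open Set Function

lemma step_lemma (F : Set ℝ) (hFc : IsClosed F) (hFn : IsNowhereDense F)
    (a b : ℝ) (hab : a < b) :
    ∃ a₀ b₀ a₁ b₁ : ℝ, a ≤ a₀ ∧ a₀ < b₀ ∧ b₀ < a₁ ∧ a₁ < b₁ ∧ b₁ ≤ b ∧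
      b₀ - a₀ ≤ (b - a) / 2 ∧ b₁ - a₁ ≤ (b - a) / 2 ∧
      Icc a₀ b₀ ∩ F = ∅ ∧ Icc a₁ b₁ ∩ F = ∅ := by
  have hFd : Dense Fᶜ := (isClosed_isNowhereDense_iff_compl.mp ⟨hFc, hFn⟩).2
  obtain ⟨x, hxF, hxI⟩ := hFd.exists_mem_open isOpen_Ioo (nonempty_Ioo.mpr hab)
  have hO : IsOpen (Fᶜ ∩ Ioo a b) := hFc.isOpen_compl.inter isOpen_Ioo
  obtain ⟨δ, hδ, hball⟩ := Metric.isOpen_iff.mp hO x ⟨hxF, hxI⟩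
  set ε := min (δ / 2) ((b - a) / 8) with hε
  have hεpos : 0 < ε := lt_min (by linarith) (by linarith)
  have hεδ : ε < δ := lt_of_le_of_lt (min_le_left _ _) (by linarith)
  have hεb : ε ≤ (b - a) / 8 := min_le_right _ _
  have hIcc : Icc (x - ε) (x + ε) ⊆ Fᶜ ∩ Ioo a b := by
    intro y hy
    apply hball
    rw [Metric.mem_ball, Real.dist_eq, abs_lt]
    constructor <;> [linarith [hy.1]; linarith [hy.2]]
  refine ⟨x - ε, x - ε / 2, x, x + ε, ?_, by linarith, by linarith, by linarith, ?_,
    by linarith, by linarith, ?_, ?_⟩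
  · have := hIcc ⟨le_refl _, by linarith⟩
    exact le_of_lt this.2.1
  · have := hIcc ⟨by linarith, le_refl _⟩
    exact le_of_lt this.2.2
  · apply eq_empty_of_forall_notMem
    rintro y ⟨hy1, hy2⟩
    exact (hIcc ⟨hy1.1, by linarith [hy1.2]⟩).1 hy2
  · apply eq_empty_of_forall_notMem
    rintro y ⟨hy1, hy2⟩
    exact (hIcc ⟨by linarith [hy1.1], hy1.2⟩).1 hy2

lemma perfect_in_box (F : ℕ → Set ℝ) (hFc : ∀ n, IsClosed (F n))
    (hFn : ∀ n, IsNowhereDense (F n)) (A B : ℝ) (hAB : A < B) :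
    ∃ P : Set ℝ, Perfect P ∧ P.Nonempty ∧ P ⊆ Icc A B ∧ ∀ n, P ∩ F n = ∅ := by
  have hex : ∀ (n : ℕ) (p : ℝ × ℝ), ∃ q : Bool → ℝ × ℝ, p.1 < p.2 →
      p.1 ≤ (q false).1 ∧ (q false).1 < (q false).2 ∧ (q false).2 < (q true).1 ∧
      (q true).1 < (q true).2 ∧ (q true).2 ≤ p.2 ∧
      (q false).2 - (q false).1 ≤ (p.2 - p.1) / 2 ∧
      (q true).2 - (q true).1 ≤ (p.2 - p.1) / 2 ∧
      Icc (q false).1 (q false).2 ∩ F n = ∅ ∧ Icc (q true).1 (q true).2 ∩ F n = ∅ := by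
    intro n p
    by_cases h : p.1 < p.2
    · obtain ⟨a₀, b₀, a₁, b₁, h1, h2, h3, h4, h5, h6, h7, h8, h9⟩ :=
        step_lemma (F n) (hFc n) (hFn n) p.1 p.2 h
      exact ⟨fun b => if b then (a₁, b₁) else (a₀, b₀), fun _ => by
        simp only [if_true, if_false, Bool.false_eq_true]
        exact ⟨h1, h2, h3, h4, h5, h6, h7, h8, h9⟩⟩
    · exact ⟨fun _ => p, fun h' => absurd h' h⟩
  choose g hg using hex
  set J : ℕ → (ℕ → Bool) → ℝ × ℝ :=
    fun n x => Nat.rec (A, B) (fun m p => g m p (x m)) n with hJ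
  have hJ0 : ∀ x, J 0 x = (A, B) := fun _ => rfl
  have hJs : ∀ n x, J (n + 1) x = g n (J n x) (x n) := fun _ _ => rfl
  have key : ∀ (n : ℕ) (p : ℝ × ℝ) (h : p.1 < p.2) (b : Bool),
      p.1 ≤ (g n p b).1 ∧ (g n p b).1 < (g n p b).2 ∧ (g n p b).2 ≤ p.2 ∧
      (g n p b).2 - (g n p b).1 ≤ (p.2 - p.1) / 2 ∧
      Icc (g n p b).1 (g n p b).2 ∩ F n = ∅ := by
    intro n p h b
    obtain ⟨h1, h2, h3, h4, h5, h6, h7, h8, h9⟩ := hg n p h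
    cases b
    · exact ⟨h1, h2, by linarith, h6, h8⟩
    · exact ⟨by linarith, h4, h5, h7, h9⟩
  have sep : ∀ (n : ℕ) (p : ℝ × ℝ) (h : p.1 < p.2),
      (g n p false).2 < (g n p true).1 := fun n p h => (hg n p h).2.2.1
  have hlt : ∀ n x, (J n x).1 < (J n x).2 := by
    intro n x
    induction n with
    | zero => exact hAB
    | succ m ih => exact (key m _ ih (x m)).2.1
  have hnest : ∀ n x, (J n x).1 ≤ (J (n + 1) x).1 ∧ (J (n + 1) x).2 ≤ (J n x).2 :=
    fun n x => ⟨(key n _ (hlt n x) (x n)).1, (key n _ (hlt n x) (x n)).2.2.1⟩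
  have hmono1 : ∀ x, Monotone fun n => (J n x).1 :=
    fun x => monotone_nat_of_le_succ fun n => (hnest n x).1
  have hmono2 : ∀ x, Antitone fun n => (J n x).2 :=
    fun x => antitone_nat_of_succ_le fun n => (hnest n x).2
  have hub : ∀ x n m, (J n x).1 ≤ (J m x).2 := by
    intro x n m
    rcases le_total n m with h | h
    · exact le_of_lt (lt_of_le_of_lt (hmono1 x h) (hlt m x))
    · exact le_of_lt (lt_of_lt_of_le (hlt n x) (hmono2 x h))
  have hlen : ∀ n x, (J n x).2 - (J n x).1 ≤ (B - A) / 2 ^ n := by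
    intro n x
    induction n with
    | zero =>
      rw [hJ0]
      norm_num
    | succ m ih =>
      have h1 := (key m _ (hlt m x) (x m)).2.2.2.1
      have h2 : (0:ℝ) < 2 ^ m := by positivity
      have h3 : (2:ℝ) ^ (m + 1) = 2 ^ m * 2 := pow_succ 2 m
      rw [hJs]
      rw [h3]
      rw [div_mul_eq_div_div]
      linarith
  have hdep : ∀ n x y, (∀ i, i < n → x i = y i) → J n x = J n y := by
    intro n
    induction n with
    | zero => intro x y _; rfl
    | succ m ih =>
      intro x y h
      rw [hJs, hJs, ih x y fun i hi => h i (Nat.lt_succ_of_lt hi), h m (Nat.lt_succ_self m)]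
  have hbdd : ∀ x, BddAbove (range fun n => (J n x).1) := by
    intro x
    refine ⟨(J 0 x).2, ?_⟩
    rintro _ ⟨n, rfl⟩
    exact hub x n 0
  set f : (ℕ → Bool) → ℝ := fun x => ⨆ n, (J n x).1 with hf
  have hfl : ∀ x n, (J n x).1 ≤ f x := fun x n => le_ciSup (hbdd x) n
  have hfu : ∀ x n, f x ≤ (J n x).2 := fun x n => ciSup_le fun m => hub x m n
  have hinj2 : ∀ x y n, (∀ i, i < n → x i = y i) → x n = false → y n = true →
      f x < f y := by
    intro x y n h hx hy
    have hJeq : J n x = J n y := hdep n x y h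
    calc f x ≤ (J (n + 1) x).2 := hfu x (n + 1)
      _ = (g n (J n x) false).2 := by rw [hJs, hx]
      _ < (g n (J n x) true).1 := sep n (J n x) (hlt n x)
      _ = (J (n + 1) y).1 := by rw [hJs, hy, hJeq]
      _ ≤ f y := hfl y (n + 1)
  have hinj : Function.Injective f := by
    intro x y hxy
    by_contra hne
    have hexn : ∃ n, x n ≠ y n := by
      by_contra h
      push_neg at h
      exact hne (funext h)
    set n := Nat.find hexn with hn
    have hmin : ∀ i, i < n → x i = y i := fun i hi => not_not.mp (Nat.find_min hexn hi)
    have hdiff := Nat.find_spec hexn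
    rcases Bool.eq_false_or_eq_true (x n) with hx | hx <;>
      rcases Bool.eq_false_or_eq_true (y n) with hy | hy
    · exact hdiff (hx.trans hy.symm)
    · exact (hinj2 y x n (fun i hi => (hmin i hi).symm) hy hx).ne hxy.symm
    · exact (hinj2 x y n hmin hx hy).ne hxy
    · exact hdiff (hx.trans hy.symm)
  have hEnhds : ∀ (n : ℕ) (x : ℕ → Bool), {y : ℕ → Bool | ∀ i, i < n → y i = x i} ∈ nhds x := by
    intro n x
    have heq : {y : ℕ → Bool | ∀ i, i < n → y i = x i} =
        ⋂ i ∈ Finset.range n, {y : ℕ → Bool | y i = x i} := by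
      ext y; simp [Finset.mem_range]
    rw [heq]
    refine (Filter.biInter_finset_mem _).mpr fun i _ => ?_
    have : IsOpen {y : ℕ → Bool | y i = x i} := by
      have heq2 : {y : ℕ → Bool | y i = x i} = (fun y : ℕ → Bool => y i) ⁻¹' {b | b = x i} := rfl
      rw [heq2]
      exact (isOpen_discrete _).preimage (continuous_apply i)
    exact this.mem_nhds rfl
  have hsmall : ∀ ε : ℝ, 0 < ε → ∃ n : ℕ, (B - A) / 2 ^ n < ε := by
    intro ε hε
    obtain ⟨n, hn⟩ := pow_unbounded_of_one_lt ((B - A) / ε) (one_lt_two (α := ℝ))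
    refine ⟨n, ?_⟩
    rw [div_lt_iff₀ (by positivity)]
    rw [div_lt_iff₀ hε] at hn
    linarith
  have hdist' : ∀ (n : ℕ) (x y : ℕ → Bool), (∀ i, i < n → y i = x i) →
      |f y - f x| ≤ (B - A) / 2 ^ n := by
    intro n x y h
    have hJeq : J n y = J n x := hdep n y x h
    have h1 := hfl y n
    have h2 := hfu y n
    have h3 := hfl x n
    have h4 := hfu x n
    rw [hJeq] at h1 h2
    have := hlen n x
    rw [abs_le]
    constructor <;> linarith
  have hcont : Continuous f := by
    rw [continuous_iff_continuousAt]
    intro x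
    rw [ContinuousAt, Metric.tendsto_nhds]
    intro ε hε
    obtain ⟨n, hn⟩ := hsmall ε hε
    filter_upwards [hEnhds n x] with y hy
    rw [Real.dist_eq]
    exact lt_of_le_of_lt (hdist' n x y hy) hn
  refine ⟨range f, ⟨(isCompact_range hcont).isClosed, ?_⟩, ⟨f fun _ => false, mem_range_self _⟩,
    ?_, ?_⟩
  · rintro _ ⟨x, rfl⟩
    rw [accPt_iff_nhds]
    intro U hU
    obtain ⟨ε, hε, hball⟩ := Metric.mem_nhds_iff.mp hU
    obtain ⟨n, hn⟩ := hsmall ε hε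
    set y := Function.update x n (!(x n)) with hy
    have hyx : y ≠ x := by
      intro h
      have : y n = x n := by rw [h]
      rw [hy, Function.update_self] at this
      exact (Bool.not_ne_self (x n)) this
    have hagree : ∀ i, i < n → y i = x i := fun i hi =>
      Function.update_of_ne (Nat.ne_of_lt hi) _ _
    refine ⟨f y, ⟨hball ?_, mem_range_self _⟩, hinj.ne hyx⟩
    rw [Metric.mem_ball, Real.dist_eq]
    exact lt_of_le_of_lt (hdist' n x y hagree) hn
  · rintro _ ⟨x, rfl⟩
    exact ⟨hfl x 0, hfu x 0⟩
  · intro n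
    apply eq_empty_of_forall_notMem
    rintro z ⟨⟨x, rfl⟩, hzF⟩
    have h1 := hfl x (n + 1)
    have h2 := hfu x (n + 1)
    have h3 := (key n _ (hlt n x) (x n)).2.2.2.2
    rw [← hJs] at h3
    have hmem : f x ∈ Icc (J (n + 1) x).1 (J (n + 1) x).2 ∩ F n := ⟨⟨h1, h2⟩, hzF⟩
    rw [h3] at hmem
    exact hmem

lemma perfect_translate (P : Set ℝ) (hP : Perfect P) (c : ℝ) :
    Perfect ((fun t => t + c) '' P) := by
  constructor
  · have : (fun t => t + c) '' P = Homeomorph.addRight c '' P := rfl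
    rw [this, Homeomorph.isClosed_image]
    exact hP.closed
  · rintro _ ⟨p, hp, rfl⟩
    rw [accPt_iff_nhds]
    intro U hU
    have hpre : (fun t : ℝ => t + c) ⁻¹' U ∈ nhds p :=
      (continuous_add_right c).continuousAt.preimage_mem_nhds hU
    obtain ⟨y, ⟨hyU, hyP⟩, hyne⟩ := accPt_iff_nhds.mp (hP.acc p hp) _ hpre
    exact ⟨y + c, ⟨hyU, mem_image_of_mem _ hyP⟩, fun h => hyne (by linarith [add_right_cancel h])⟩



/-- `V` is a Vitali set: it contains exactly one element of each coset of `ℚ` in `ℝ`. -/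
def IsVitali (V : Set ℝ) : Prop :=
  ∀ x : ℝ, ∃! v : ℝ, v ∈ V ∧ ∃ q : ℚ, x - v = (q : ℝ)

/-- `B` is a Bernstein set: both `B` and its complement meet every nonempty perfect set. -/
def IsBernstein (B : Set ℝ) : Prop :=
  ∀ P : Set ℝ, Perfect P → P.Nonempty → (B ∩ P).Nonempty ∧ (Bᶜ ∩ P).Nonempty

/-- `A` has the Baire property: it differs from an open set by a meager set. -/
def HasBaireProp (A : Set ℝ) : Prop :=
  ∃ U : Set ℝ, IsOpen U ∧ IsMeagre (symmDiff A U)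

/-- If `V` is Vitali-and-Bernstein, `B` is nonmeager with the Baire property, and
`F = (V + r₀) ∩ B` is nonmeager, then `F` is a full subset of `B`: every
Baire-property set contained in `B \ F` is meager. -/
theorem vitali_bernstein_translate_full (V B : Set ℝ)
    (hV : IsVitali V) (hVB : IsBernstein V)
    (hBP : HasBaireProp B) (hnm : ¬ IsMeagre B) (r₀ : ℚ)
    (hF : ¬ IsMeagre (((fun v => v + (r₀ : ℝ)) '' V) ∩ B)) :
    ∀ S : Set ℝ, S ⊆ B \ (((fun v => v + (r₀ : ℝ)) '' V) ∩ B) →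
      HasBaireProp S → IsMeagre S := by
  intro S hSsub hSBP
  obtain ⟨U, hUopen, hUmeag⟩ := hSBP
  rcases U.eq_empty_or_nonempty with rfl | ⟨x, hxU⟩
  · have : symmDiff S ∅ = S := by simp [symmDiff_def]
    rwa [this] at hUmeag
  -- U is nonempty: derive a contradiction, S cannot avoid V + r₀ on U
  exfalso
  obtain ⟨T, hTnd, hTc, hTsub⟩ := isMeagre_iff_countable_union_isNowhereDense.mp hUmeag
  have hTc' : (insert (∅ : Set ℝ) T).Countable := hTc.insert _
  obtain ⟨gs, hgs⟩ := hTc'.exists_eq_range ⟨∅, mem_insert _ _⟩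
  set F : ℕ → Set ℝ := fun n => closure (gs n) with hFdef
  have hmem : ∀ n, gs n ∈ insert (∅ : Set ℝ) T := by
    intro n
    rw [hgs]
    exact mem_range_self n
  have hFc : ∀ n, IsClosed (F n) := fun n => isClosed_closure
  have hFn : ∀ n, IsNowhereDense (F n) := by
    intro n
    rcases hmem n with h | h
    · rw [hFdef]
      simp only [h]
      rw [closure_empty]
      exact isNowhereDense_empty
    · exact (hTnd _ h).closure
  have hsub2 : symmDiff S U ⊆ ⋃ n, F n := by
    intro y hy
    obtain ⟨t, htT, hyt⟩ := hTsub hy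
    have : t ∈ insert (∅ : Set ℝ) T := mem_insert_of_mem _ htT
    rw [hgs] at this
    obtain ⟨n, rfl⟩ := this
    exact mem_iUnion.mpr ⟨n, subset_closure hyt⟩
  obtain ⟨δ, hδ, hball⟩ := Metric.isOpen_iff.mp hUopen x hxU
  have hIccU : Icc (x - δ / 2) (x + δ / 2) ⊆ U := by
    intro y hy
    apply hball
    rw [Metric.mem_ball, Real.dist_eq, abs_lt]
    constructor <;> [linarith [hy.1]; linarith [hy.2]]
  obtain ⟨P, hPperf, ⟨p0, hp0⟩, hPIcc, hPF⟩ :=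
    perfect_in_box F hFc hFn (x - δ / 2) (x + δ / 2) (by linarith)
  have hPS : P ⊆ S := by
    intro z hz
    have hzU : z ∈ U := hIccU (hPIcc hz)
    have hzn : z ∉ symmDiff S U := by
      intro h
      obtain ⟨n, hn⟩ := mem_iUnion.mp (hsub2 h)
      have : z ∈ P ∩ F n := ⟨hz, hn⟩
      rw [hPF n] at this
      exact this
    rw [symmDiff_def] at hzn
    by_contra hzS
    exact hzn (Or.inr ⟨hzU, hzS⟩)
  set Q : Set ℝ := (fun t => t + (-(r₀ : ℝ))) '' P with hQdef
  have hQperf : Perfect Q := perfect_translate P hPperf _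
  have hQne : Q.Nonempty := ⟨p0 + -(r₀ : ℝ), mem_image_of_mem _ hp0⟩
  obtain ⟨v, hvV, hvQ⟩ := (hVB Q hQperf hQne).1
  obtain ⟨p, hpP, hpv⟩ := hvQ
  have hpv' : p + -(r₀ : ℝ) = v := hpv
  have hpW : p ∈ (fun v => v + (r₀ : ℝ)) '' V := ⟨v, hvV, by simp; linarith⟩
  have hpS := hSsub (hPS hpP)
  exact hpS.2 ⟨hpW, hpS.1⟩
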